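/- arXiv:2411.15012 — 3 statements merged into one kernel-verified Lean document; each statement's English description precedes it below -/
import Mathlib

section
/- Quantitative Lusin theorem: Let μ be a Radon measure on ℝⁿ, Ω ⊆ ℝⁿ open with μ(Ω) < ∞, and f : Ω → ℝⁿ Borel. For every ε > 0 there exists a continuous function h : Ω → ℝⁿ with compact support in Ω such that μ({x ∈ Ω : h(x) ≠ f(x)}) < ε and ‖h‖_{L^p(μ)} ≤ (1+ε)·‖f‖_{L^p(μ)} for every p ∈ [1, ∞] simultaneously (with one single h independent of p). -/
open MeasureTheory Set ENNReal Filter Metric Topology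

section rad
variable {E : Type*} [NormedAddCommGroup E] [NormedSpace ℝ E]

noncomputable def rad (m : ℝ) (y : E) : E := (m / max m ‖y‖) • y

lemma rad_continuous {m : ℝ} (hm : 0 < m) : Continuous (rad (E := E) m) := by
  apply Continuous.smul _ continuous_id
  exact continuous_const.div (continuous_const.max continuous_norm)
    (fun y => (lt_max_iff.2 (Or.inl hm)).ne')

lemma norm_rad_le {m : ℝ} (hm : 0 < m) (y : E) : ‖rad m y‖ ≤ m := by
  have hmax : 0 < max m ‖y‖ := lt_max_iff.2 (Or.inl hm)
  have h1 : ‖rad m y‖ = (m / max m ‖y‖) * ‖y‖ := by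
    rw [rad, norm_smul, Real.norm_eq_abs, abs_of_nonneg (div_nonneg hm.le hmax.le)]
  rw [h1]
  calc (m / max m ‖y‖) * ‖y‖ ≤ (m / max m ‖y‖) * max m ‖y‖ :=
        mul_le_mul_of_nonneg_left (le_max_right _ _) (div_nonneg hm.le hmax.le)
    _ = m := div_mul_cancel₀ _ hmax.ne'

lemma rad_eq_self {m : ℝ} (hm : 0 < m) {y : E} (hy : ‖y‖ ≤ m) : rad m y = y := by
  rw [rad, max_eq_left hy, div_self hm.ne', one_smul]

end rad

lemma key_scalar {ε q : ℝ} (hε : 0 < ε) (hq : 1 ≤ q) :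
    1 + (1 + ε/2) ^ q * (ε / (1+ε/2)) ≤ (1+ε) ^ q := by
  set ρ : ℝ := 1 + ε/2 with hρdef
  have hρ : 0 < ρ := by positivity
  set a : ℝ := (1+ε)/ρ with hadef
  set b : ℝ := 1/ρ with hbdef
  have ha1 : 1 ≤ a := by rw [hadef, le_div_iff₀ hρ]; rw [hρdef]; linarith
  have hb0 : 0 < b := by positivity
  have hb1 : b ≤ 1 := by rw [hbdef, div_le_one hρ]; rw [hρdef]; linarith
  have haq : a ≤ a ^ q := by
    calc a = a ^ (1:ℝ) := (Real.rpow_one a).symm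
    _ ≤ a ^ q := Real.rpow_le_rpow_of_exponent_le ha1 hq
  have hbq : b ^ q ≤ b := by
    calc b ^ q ≤ b ^ (1:ℝ) := Real.rpow_le_rpow_of_exponent_ge hb0 hb1 hq
    _ = b := Real.rpow_one b
  have hρq : 0 < ρ ^ q := Real.rpow_pos_of_pos hρ q
  have hab : a - b = ε / ρ := by rw [hadef, hbdef]; ring
  have h1 : (1+ε) ^ q = ρ ^ q * a ^ q := by
    rw [← Real.mul_rpow hρ.le (by positivity)]
    rw [hadef]
    field_simp
  have h2 : (1:ℝ) = ρ ^ q * b ^ q := by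
    rw [← Real.mul_rpow hρ.le hb0.le]
    rw [hbdef, mul_one_div, div_self hρ.ne', Real.one_rpow]
  rw [h1]
  calc 1 + ρ ^ q * (ε / ρ) = ρ ^ q * b ^ q + ρ ^ q * (a - b) := by rw [← h2, hab]
    _ ≤ ρ ^ q * b + ρ ^ q * (a - b) := by gcongr
    _ = ρ ^ q * a := by ring
    _ ≤ ρ ^ q * a ^ q := by gcongr

variable {n : ℕ}


lemma exists_cutoff {K U : Set (EuclideanSpace ℝ (Fin n))} (hK : IsCompact K) (hU : IsOpen U)
    (hKU : K ⊆ U) :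
    ∃ φ : EuclideanSpace ℝ (Fin n) → ℝ, Continuous φ ∧ HasCompactSupport φ ∧ tsupport φ ⊆ U ∧
      EqOn φ 1 K ∧ ∀ x, φ x ∈ Icc (0:ℝ) 1 := by
  obtain ⟨k, hk, hKk, hkU⟩ := exists_compact_between hK hU hKU
  obtain ⟨φ, hφ1, hφ0, hφc, hφIcc⟩ := exists_continuous_one_zero_of_isCompact hK
    isOpen_interior.isClosed_compl (disjoint_compl_right_iff_subset.mpr hKk)
  have hsupp : Function.support φ ⊆ interior k := fun x hx => by
    by_contra hxk
    exact hx (hφ0 hxk)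
  have hts : tsupport φ ⊆ k :=
    (closure_minimal (hsupp.trans interior_subset) hk.isClosed)
  exact ⟨φ, φ.continuous, hφc, hts.trans hkU, hφ1, hφIcc⟩


lemma lusin_core (ν : Measure (EuclideanSpace ℝ (Fin n))) [IsFiniteMeasure ν]
    {f : EuclideanSpace ℝ (Fin n) → EuclideanSpace ℝ (Fin n)} (hf : Measurable f)
    {Ω : Set (EuclideanSpace ℝ (Fin n))} (hΩ : IsOpen Ω) (hνΩ : ν Ωᶜ = 0)
    {δ : ℝ≥0∞} (hδ : δ ≠ 0) :
    ∃ K, IsCompact K ∧ K ⊆ Ω ∧ ContinuousOn f K ∧ ν Kᶜ < δ := by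
  -- small real parameter
  set m0 : ℝ≥0∞ := min δ 1 with hm0def
  have hm0ne : m0 ≠ 0 := by rw [hm0def]; exact (lt_min (pos_iff_ne_zero.mpr hδ) one_pos).ne'
  have hm0top : m0 ≠ ⊤ := by simp [hm0def]
  set r : ℝ := m0.toReal / 4 with hrdef
  have hr0 : 0 < r := by
    have := ENNReal.toReal_pos hm0ne hm0top
    positivity
  have hsum : ENNReal.ofReal r + ENNReal.ofReal r + ENNReal.ofReal r < δ := by
    have h1 : ENNReal.ofReal r + ENNReal.ofReal r + ENNReal.ofReal r
        = ENNReal.ofReal (3 * (m0.toReal / 4)) := by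
      rw [← ENNReal.ofReal_add hr0.le hr0.le, ← ENNReal.ofReal_add (by positivity) hr0.le]
      rw [hrdef]; ring_nf
    rw [h1]
    calc ENNReal.ofReal (3 * (m0.toReal / 4)) < ENNReal.ofReal m0.toReal := by
          apply ENNReal.ofReal_lt_ofReal_iff_of_nonneg (by positivity) |>.mpr
          have := ENNReal.toReal_pos hm0ne hm0top
          linarith
      _ = m0 := ENNReal.ofReal_toReal hm0top
      _ ≤ δ := min_le_left _ _
  have hrne : ENNReal.ofReal r ≠ 0 := by
    simp [ENNReal.ofReal_eq_zero, not_le, hr0]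
  -- truncation level
  have htend : Tendsto (fun m : ℕ => ν {x | (m:ℝ) < ‖f x‖}) atTop (𝓝 0) := by
    have h0 : ν (⋂ m : ℕ, {x | (m:ℝ) < ‖f x‖}) = 0 := by
      have : (⋂ m : ℕ, {x | (m:ℝ) < ‖f x‖}) = ∅ := by
        ext x
        simp only [mem_iInter, mem_setOf_eq, mem_empty_iff_false, iff_false, not_forall, not_lt]
        obtain ⟨m, hm⟩ := exists_nat_ge ‖f x‖
        exact ⟨m, hm⟩
      rw [this, measure_empty]
    have := tendsto_measure_iInter_atTop (μ := ν)
      (s := fun m : ℕ => {x | (m:ℝ) < ‖f x‖})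
      (fun m => ((measurableSet_lt measurable_const hf.norm)).nullMeasurableSet)
      (fun i j hij => fun x hx => lt_of_le_of_lt (by exact_mod_cast hij : (i:ℝ) ≤ j) hx)
      ⟨0, measure_ne_top _ _⟩
    rwa [h0] at this
  obtain ⟨m, hm⟩ := (htend.eventually (eventually_lt_nhds (by positivity : (0:ℝ≥0∞) < ENNReal.ofReal r))).exists
  set mR : ℝ := m + 1 with hmRdef
  have hmR0 : 0 < mR := by positivity
  have hmS : ν {x | mR < ‖f x‖} < ENNReal.ofReal r := by
    refine lt_of_le_of_lt (measure_mono ?_) hm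
    intro x hx
    simp only [mem_setOf_eq] at hx ⊢
    linarith
  -- truncated function
  set F : EuclideanSpace ℝ (Fin n) → EuclideanSpace ℝ (Fin n) := fun x => rad mR (f x) with hFdef
  have hFmeas : Measurable F := (rad_continuous hmR0).measurable.comp hf
  have hFmem : MemLp F 1 ν :=
    MemLp.of_bound hFmeas.aestronglyMeasurable mR (ae_of_all _ fun x => norm_rad_le hmR0 _)
  -- approximating sequence
  have happrox : ∀ i : ℕ, ∃ g : EuclideanSpace ℝ (Fin n) → EuclideanSpace ℝ (Fin n),
      Continuous g ∧ eLpNorm (F - g) 1 ν ≤ (2⁻¹ : ℝ≥0∞) ^ i :=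
    fun i => by
      obtain ⟨g, _, hgn, hgc, _⟩ := hFmem.exists_hasCompactSupport_eLpNorm_sub_le
        (one_ne_top) (pow_ne_zero i (by norm_num) : ((2⁻¹ : ℝ≥0∞)) ^ i ≠ 0)
      exact ⟨g, hgc, hgn⟩
  choose g hgcont hgn using happrox
  have htim : TendstoInMeasure ν g atTop F := by
    apply tendstoInMeasure_of_tendsto_eLpNorm (p := 1) one_ne_zero
      (fun i => (hgcont i).aestronglyMeasurable) hFmeas.aestronglyMeasurable
    apply tendsto_of_tendsto_of_tendsto_of_le_of_le tendsto_const_nhds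
      (ENNReal.tendsto_pow_atTop_nhds_zero_of_lt_one (by norm_num : (2⁻¹ : ℝ≥0∞) < 1))
      (fun i => zero_le)
    intro i
    show eLpNorm (g i - F) 1 ν ≤ _
    rw [eLpNorm_sub_comm]
    exact hgn i
  obtain ⟨ns, _, hae⟩ := htim.exists_seq_tendsto_ae
  -- Egorov
  obtain ⟨t, htmeas, htν, htu⟩ := tendstoUniformlyOn_of_ae_tendsto'
    (fun i => (hgcont (ns i)).stronglyMeasurable) hFmeas.stronglyMeasurable hae hr0
  have hFcont : ContinuousOn F tᶜ :=
    htu.continuousOn (Eventually.of_forall fun i => (hgcont (ns i)).continuousOn).frequently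
  -- compact subset
  set B : Set (EuclideanSpace ℝ (Fin n)) := tᶜ ∩ Ω ∩ {x | ‖f x‖ ≤ mR} with hBdef
  have hBmeas : MeasurableSet B :=
    ((htmeas.compl.inter hΩ.measurableSet).inter (measurableSet_le hf.norm measurable_const))
  obtain ⟨K, hKB, hKcomp, hKd⟩ := MeasurableSet.exists_isCompact_diff_lt (μ := ν) hBmeas (measure_ne_top ν B) hrne
  refine ⟨K, hKcomp, fun x hx => (hKB hx).1.2, ?_, ?_⟩
  · -- continuity of f on K
    have h1 : ContinuousOn F K := hFcont.mono (fun x hx => (hKB hx).1.1)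
    exact h1.congr (fun x hx => (rad_eq_self hmR0 (hKB hx).2).symm)
  · -- measure bound
    have hsub : Kᶜ ⊆ (t ∪ Ωᶜ ∪ {x | mR < ‖f x‖}) ∪ (B \ K) := by
      intro x hx
      by_cases hxB : x ∈ B
      · exact Or.inr ⟨hxB, hx⟩
      · left
        simp only [hBdef, mem_inter_iff, mem_setOf_eq, not_and, not_le, mem_union, mem_compl_iff] at hxB ⊢
        by_cases h1 : x ∈ t
        · exact Or.inl (Or.inl h1)
        · by_cases h2 : x ∈ Ω
          · exact Or.inr (hxB ⟨h1, h2⟩)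
          · exact Or.inl (Or.inr h2)
    calc ν Kᶜ ≤ ν (t ∪ Ωᶜ ∪ {x | mR < ‖f x‖}) + ν (B \ K) := le_trans (measure_mono hsub) (measure_union_le _ _)
      _ ≤ (ν t + ν Ωᶜ + ν {x | mR < ‖f x‖}) + ν (B \ K) := by
          gcongr
          exact le_trans (measure_union_le _ _) (by gcongr; exact measure_union_le _ _)
      _ ≤ (ENNReal.ofReal r + 0 + ν {x | mR < ‖f x‖}) + ν (B \ K) := by gcongr <;> simp [htν, hνΩ]
      _ < (ENNReal.ofReal r + 0 + ENNReal.ofReal r) + ENNReal.ofReal r := by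
          refine ENNReal.add_lt_add ?_ hKd
          exact ENNReal.add_lt_add_left (by simp) hmS
      _ = ENNReal.ofReal r + ENNReal.ofReal r + ENNReal.ofReal r := by rw [add_zero]
      _ < δ := hsum

/-- Quantitative Lusin theorem (Lemma 3.3 of the paper). -/
theorem quantitative_lusin {n : ℕ} (μ : Measure (EuclideanSpace ℝ (Fin n)))
    (Ω : Set (EuclideanSpace ℝ (Fin n))) (hΩ : IsOpen Ω) (hμΩ : μ Ω < ⊤)
    (f : EuclideanSpace ℝ (Fin n) → EuclideanSpace ℝ (Fin n)) (hf : Measurable f)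
    (ε : ℝ) (hε : 0 < ε) :
    ∃ h : EuclideanSpace ℝ (Fin n) → EuclideanSpace ℝ (Fin n),
      Continuous h ∧ HasCompactSupport h ∧ tsupport h ⊆ Ω ∧
      μ {x ∈ Ω | h x ≠ f x} < ENNReal.ofReal ε ∧
      ∀ p : ℝ≥0∞, 1 ≤ p →
        eLpNorm h p (μ.restrict Ω) ≤ (1 + ENNReal.ofReal ε) * eLpNorm f p (μ.restrict Ω) := by
  set ν : Measure (EuclideanSpace ℝ (Fin n)) := μ.restrict Ω with hνdef
  haveI : IsFiniteMeasure ν := ⟨by rwa [hνdef, Measure.restrict_apply_univ]⟩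
  have hνΩc : ν Ωᶜ = 0 := by
    rw [hνdef, Measure.restrict_apply hΩ.measurableSet.compl, compl_inter_self, measure_empty]
  set M₀ : ℝ≥0∞ := eLpNormEssSup f ν with hM₀def
  by_cases hM0 : M₀ = 0
  · -- f = 0 a.e.; take h = 0
    refine ⟨fun _ => 0, continuous_const, ?_, ?_, ?_, ?_⟩
    · show IsCompact (tsupport fun _ => (0 : EuclideanSpace ℝ (Fin n)))
      have : tsupport (fun _ : EuclideanSpace ℝ (Fin n) => (0 : EuclideanSpace ℝ (Fin n))) = ∅ := by
        simp [tsupport]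
      rw [this]; exact isCompact_empty
    · have : tsupport (fun _ : EuclideanSpace ℝ (Fin n) => (0 : EuclideanSpace ℝ (Fin n))) = ∅ := by
        simp [tsupport]
      rw [this]; exact empty_subset _
    · have hae : f =ᵐ[ν] 0 := (eLpNormEssSup_eq_zero_iff).mp hM0
      have h0 : ν {x | f x ≠ 0} = 0 := hae
      have hsub : {x ∈ Ω | (fun _ => (0 : EuclideanSpace ℝ (Fin n))) x ≠ f x}
          ⊆ {x | f x ≠ 0} ∩ Ω := by
        intro x hx
        exact ⟨fun hfx => hx.2 (by simp [hfx]), hx.1⟩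
      calc μ {x ∈ Ω | (fun _ => (0 : EuclideanSpace ℝ (Fin n))) x ≠ f x}
          ≤ μ ({x | f x ≠ 0} ∩ Ω) := measure_mono hsub
        _ = ν {x | f x ≠ 0} := by
            rw [hνdef, Measure.restrict_apply]
            exact (hf (measurableSet_singleton 0)).compl
        _ = 0 := h0
        _ < ENNReal.ofReal ε := by simp [ENNReal.ofReal_pos, hε]
    · intro p _
      simp [eLpNorm_zero']
  · -- main case
    have hε2 : (ENNReal.ofReal (ε/2)) ≠ 0 := by simp [ENNReal.ofReal_eq_zero, not_le]; positivity
    obtain ⟨K₀, hK₀c, hK₀Ω, hK₀f, hK₀ν⟩ := lusin_core ν hf hΩ hνΩc hε2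
    set ρ : ℝ := 1 + ε/2 with hρdef
    have hρ1 : 1 < ρ := by rw [hρdef]; linarith
    have hρ0 : 0 < ρ := lt_trans one_pos hρ1
    -- choice of the level L
    obtain ⟨L, hL0, hLnull, hLM, hLinf⟩ :
        ∃ L : ℝ, 0 < L ∧ ν (K₀ ∩ {x | ¬ ‖f x‖ ≤ L}) = 0 ∧
          ENNReal.ofReal (L/ρ) < M₀ ∧ ENNReal.ofReal L ≤ (1 + ENNReal.ofReal ε) * M₀ := by
      by_cases hMtop : M₀ = ⊤
      · obtain ⟨C, hC⟩ := hK₀c.exists_bound_of_continuousOn hK₀f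
        refine ⟨max C 0 + 1, by positivity, ?_, by rw [hMtop]; exact ENNReal.ofReal_lt_top, ?_⟩
        · have : K₀ ∩ {x | ¬ ‖f x‖ ≤ max C 0 + 1} = ∅ := by
            ext x
            simp only [mem_inter_iff, mem_setOf_eq, mem_empty_iff_false, iff_false, not_and,
              not_not]
            intro hx
            have := hC x hx
            calc ‖f x‖ ≤ C := this
              _ ≤ max C 0 + 1 := by
                  have := le_max_left C 0
                  linarith
          rw [this, measure_empty]
        · rw [hMtop, ENNReal.mul_top (by simp)]
          exact le_top
      · have hM₀pos : 0 < M₀.toReal := ENNReal.toReal_pos hM0 hMtop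
        refine ⟨M₀.toReal, hM₀pos, ?_, ?_, ?_⟩
        · refine measure_mono_null (fun x hx => ?_) (meas_eLpNormEssSup_lt (f := f) (μ := ν))
          have hx2 : M₀.toReal < ‖f x‖ := not_le.mp hx.2
          show M₀ < (‖f x‖₊ : ℝ≥0∞)
          rw [← enorm_eq_nnnorm, ← ofReal_norm, ← ENNReal.ofReal_toReal hMtop]
          exact ENNReal.ofReal_lt_ofReal_iff_of_nonneg (ENNReal.toReal_nonneg) |>.mpr hx2
        · calc ENNReal.ofReal (M₀.toReal/ρ) < ENNReal.ofReal M₀.toReal := by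
                apply ENNReal.ofReal_lt_ofReal_iff hM₀pos |>.mpr
                rw [div_lt_iff₀ hρ0]
                nlinarith
            _ = M₀ := ENNReal.ofReal_toReal hMtop
        · calc ENNReal.ofReal M₀.toReal = M₀ := ENNReal.ofReal_toReal hMtop
            _ ≤ (1 + ENNReal.ofReal ε) * M₀ := le_mul_of_one_le_left zero_le (by simp)
    -- shrink K₀ into the sublevel set
    set S : Set (EuclideanSpace ℝ (Fin n)) := K₀ ∩ {x | ‖f x‖ ≤ L} with hSdef
    have hSmeas : MeasurableSet S :=
      hK₀c.isClosed.measurableSet.inter (measurableSet_le hf.norm measurable_const)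
    have hε4 : (ENNReal.ofReal (ε/4)) ≠ 0 := by simp [ENNReal.ofReal_eq_zero, not_le]; positivity
    obtain ⟨K, hKS, hKc, hKd⟩ :=
      MeasurableSet.exists_isCompact_diff_lt (μ := ν) hSmeas (measure_ne_top ν S) hε4
    have hKΩ : K ⊆ Ω := fun x hx => hK₀Ω (hKS hx).1
    have hKf : ContinuousOn f K := hK₀f.mono (fun x hx => (hKS hx).1)
    have hKb : ∀ x ∈ K, ‖f x‖ ≤ L := fun x hx => (hKS hx).2
    have hνK : ν Kᶜ < ENNReal.ofReal ε := by
      have hsub : Kᶜ ⊆ K₀ᶜ ∪ ((K₀ ∩ {x | ¬ ‖f x‖ ≤ L}) ∪ (S \ K)) := by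
        intro x hx
        by_cases h0 : x ∈ K₀
        · by_cases h1 : ‖f x‖ ≤ L
          · exact Or.inr (Or.inr ⟨⟨h0, h1⟩, hx⟩)
          · exact Or.inr (Or.inl ⟨h0, h1⟩)
        · exact Or.inl h0
      calc ν Kᶜ ≤ ν K₀ᶜ + (ν (K₀ ∩ {x | ¬ ‖f x‖ ≤ L}) + ν (S \ K)) :=
            le_trans (measure_mono hsub) (le_trans (measure_union_le _ _)
              (by gcongr; exact measure_union_le _ _))
        _ = ν K₀ᶜ + ν (S \ K) := by rw [hLnull, zero_add]
        _ < ENNReal.ofReal (ε/2) + ENNReal.ofReal (ε/4) := ENNReal.add_lt_add hK₀ν hKd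
        _ = ENNReal.ofReal (ε/2 + ε/4) := by rw [ENNReal.ofReal_add (by positivity) (by positivity)]
        _ < ENNReal.ofReal ε := by
            apply ENNReal.ofReal_lt_ofReal_iff (by positivity) |>.mpr
            linarith
    -- Chebyshev set
    set A : ℝ≥0∞ := ν {x | ENNReal.ofReal (L/ρ) ≤ (‖f x‖₊ : ℝ≥0∞)} with hAdef
    have hAmeas : MeasurableSet {x | ENNReal.ofReal (L/ρ) ≤ (‖f x‖₊ : ℝ≥0∞)} := by
      apply measurableSet_le measurable_const
      exact (measurable_coe_nnreal_ennreal.comp hf.nnnorm)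
    have hA0 : A ≠ 0 := by
      intro hA
      have hae : ∀ᵐ x ∂ν, (‖f x‖₊ : ℝ≥0∞) ≤ ENNReal.ofReal (L/ρ) := by
        rw [ae_iff]
        refine measure_mono_null (fun x hx => ?_) hA
        exact le_of_lt (not_le.mp hx)
      have : M₀ ≤ ENNReal.ofReal (L/ρ) := essSup_le_of_ae_le _ hae
      exact absurd hLM (not_lt.mpr this)
    have hAtop : A ≠ ⊤ := measure_ne_top _ _
    -- the neighborhood U of K
    set η : ℝ := min (ε/ρ * A.toReal / 2) 1 with hηdef
    have hA_toReal : 0 < A.toReal := ENNReal.toReal_pos hA0 hAtop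
    have hη0 : 0 < η := by
      apply lt_min _ one_pos
      positivity
    have hηA : ENNReal.ofReal η ≤ ENNReal.ofReal (ε/ρ) * A := by
      calc ENNReal.ofReal η ≤ ENNReal.ofReal (ε/ρ * A.toReal) := by
            apply ENNReal.ofReal_le_ofReal
            calc η ≤ ε/ρ * A.toReal / 2 := min_le_left _ _
              _ ≤ ε/ρ * A.toReal := by nlinarith [mul_pos (div_pos hε hρ0) hA_toReal]
        _ = ENNReal.ofReal (ε/ρ) * ENNReal.ofReal A.toReal := ENNReal.ofReal_mul (by positivity)
        _ = ENNReal.ofReal (ε/ρ) * A := by rw [ENNReal.ofReal_toReal hAtop]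
    obtain ⟨U₀, hKU₀, hU₀open, _, hU₀d⟩ := MeasurableSet.exists_isOpen_diff_lt (μ := ν)
      hKc.isClosed.measurableSet (measure_ne_top ν K)
      (by simp [ENNReal.ofReal_eq_zero, not_le, hη0] : ENNReal.ofReal η ≠ 0)
    set U : Set (EuclideanSpace ℝ (Fin n)) := U₀ ∩ Ω with hUdef
    have hUopen : IsOpen U := hU₀open.inter hΩ
    have hKU : K ⊆ U := fun x hx => ⟨hKU₀ hx, hKΩ hx⟩
    have hUmeas : MeasurableSet U := hUopen.measurableSet
    have hUd : ν (U \ K) < ENNReal.ofReal η :=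
      lt_of_le_of_lt (measure_mono (diff_subset_diff_left inter_subset_left)) hU₀d
    -- cutoff and Tietze extension
    obtain ⟨φ, hφcont, hφsupp, hφU, hφ1, hφIcc⟩ := exists_cutoff hKc hUopen hKU
    have hfKcont : Continuous (K.restrict f) := hKf.restrict
    obtain ⟨g, hg⟩ := ContinuousMap.exists_restrict_eq (Y := EuclideanSpace ℝ (Fin n))
      hKc.isClosed ⟨K.restrict f, hfKcont⟩
    have hgK : ∀ x (hx : x ∈ K), g x = f x := fun x hx => by
      have := DFunLike.congr_fun hg (⟨x, hx⟩ : K)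
      exact this
    -- the function h
    set h : EuclideanSpace ℝ (Fin n) → EuclideanSpace ℝ (Fin n) :=
      fun x => φ x • rad L (g x) with hhdef
    have hhcont : Continuous h := hφcont.smul ((rad_continuous hL0).comp g.continuous)
    have hsupp : Function.support h ⊆ tsupport φ := fun x hx => by
      by_contra hxs
      exact hx (by simp [hhdef, image_eq_zero_of_notMem_tsupport hxs])
    have htsupp : tsupport h ⊆ tsupport φ :=
      closure_minimal hsupp (isClosed_tsupport φ)
    have hhK : ∀ x ∈ K, h x = f x := fun x hx => by
      rw [hhdef]
      simp only [hφ1 hx, Pi.one_apply, one_smul, hgK x hx]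
      exact rad_eq_self hL0 (hKb x hx)
    have hhb : ∀ x, ‖h x‖ ≤ L := fun x => by
      rw [hhdef]
      calc ‖φ x • rad L (g x)‖ = |φ x| * ‖rad L (g x)‖ := by
            rw [norm_smul, Real.norm_eq_abs]
        _ ≤ 1 * L := by
            apply mul_le_mul _ (norm_rad_le hL0 _) (norm_nonneg _) zero_le_one
            rw [abs_of_nonneg (hφIcc x).1]
            exact (hφIcc x).2
        _ = L := one_mul L
    have hh0 : ∀ x, x ∉ U → h x = 0 := fun x hx => by
      have : φ x = 0 := image_eq_zero_of_notMem_tsupport (fun hmem => hx (hφU hmem))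
      simp [hhdef, this]
    refine ⟨h, hhcont, ?_, htsupp.trans (hφU.trans inter_subset_right), ?_, ?_⟩
    · exact HasCompactSupport.of_support_subset_isCompact hφsupp
        (hsupp.trans subset_rfl)
    · -- measure of the disagreement set
      calc μ {x ∈ Ω | h x ≠ f x} ≤ μ (Kᶜ ∩ Ω) := by
            apply measure_mono
            intro x hx
            refine ⟨fun hxK => hx.2 (hhK x hxK), hx.1⟩
        _ = ν Kᶜ := by rw [hνdef, Measure.restrict_apply hKc.isClosed.measurableSet.compl]
        _ < ENNReal.ofReal ε := hνK
    · -- the norm estimates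
      intro p hp
      by_cases hptop : p = ⊤
      · rw [hptop, eLpNorm_exponent_top, eLpNorm_exponent_top]
        calc eLpNormEssSup h ν ≤ ENNReal.ofReal L :=
              eLpNormEssSup_le_of_ae_bound (ae_of_all _ hhb)
          _ ≤ (1 + ENNReal.ofReal ε) * M₀ := hLinf
      · have hp0 : p ≠ 0 := by
          intro h0
          rw [h0] at hp
          simp at hp
        set q : ℝ := p.toReal with hqdef
        have hq1 : 1 ≤ q := by
          rw [hqdef, ← ENNReal.toReal_one]
          exact ENNReal.toReal_mono hptop hp
        have hq0 : 0 < q := lt_of_lt_of_le one_pos hq1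
        rw [eLpNorm_eq_lintegral_rpow_enorm_toReal hp0 hptop, eLpNorm_eq_lintegral_rpow_enorm_toReal hp0 hptop]
        set If : ℝ≥0∞ := ∫⁻ x, (‖f x‖₊ : ℝ≥0∞) ^ q ∂ν with hIfdef
        set Ih : ℝ≥0∞ := ∫⁻ x, (‖h x‖₊ : ℝ≥0∞) ^ q ∂ν with hIhdef
        -- Chebyshev lower bound
        have hcheb : (ENNReal.ofReal (L/ρ)) ^ q * A ≤ If := by
          calc (ENNReal.ofReal (L/ρ)) ^ q * A
              = ∫⁻ x in {x | ENNReal.ofReal (L/ρ) ≤ (‖f x‖₊ : ℝ≥0∞)},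
                  (ENNReal.ofReal (L/ρ)) ^ q ∂ν := by
                rw [setLIntegral_const]
            _ ≤ ∫⁻ x in {x | ENNReal.ofReal (L/ρ) ≤ (‖f x‖₊ : ℝ≥0∞)},
                  (‖f x‖₊ : ℝ≥0∞) ^ q ∂ν := by
                apply setLIntegral_mono (hf.enorm.pow_const q)
                intro x hx
                exact ENNReal.rpow_le_rpow hx hq0.le
            _ ≤ If := setLIntegral_le_lintegral _ _
        -- upper bound for Ih
        have hIh : Ih ≤ If + (ENNReal.ofReal L) ^ q * (ENNReal.ofReal (ε/ρ) * A) := by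
          have hsplit : Ih = (∫⁻ x in K, (‖h x‖₊ : ℝ≥0∞) ^ q ∂ν)
              + ∫⁻ x in Kᶜ, (‖h x‖₊ : ℝ≥0∞) ^ q ∂ν :=
            (lintegral_add_compl _ hKc.isClosed.measurableSet).symm
          have h1 : (∫⁻ x in K, (‖h x‖₊ : ℝ≥0∞) ^ q ∂ν) ≤ If := by
            calc (∫⁻ x in K, (‖h x‖₊ : ℝ≥0∞) ^ q ∂ν)
                = ∫⁻ x in K, (‖f x‖₊ : ℝ≥0∞) ^ q ∂ν := by
                  apply setLIntegral_congr_fun hKc.isClosed.measurableSet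
                  intro x hx
                  simp only [hhK x hx]
              _ ≤ If := setLIntegral_le_lintegral _ _
          have h2 : (∫⁻ x in Kᶜ, (‖h x‖₊ : ℝ≥0∞) ^ q ∂ν)
              ≤ (ENNReal.ofReal L) ^ q * ν (U \ K) := by
            calc (∫⁻ x in Kᶜ, (‖h x‖₊ : ℝ≥0∞) ^ q ∂ν)
                ≤ ∫⁻ x in Kᶜ, (U \ K).indicator (fun _ => (ENNReal.ofReal L) ^ q) x ∂ν := by
                  apply setLIntegral_mono_ae
                  · exact (Measurable.indicator (measurable_const (a := (ENNReal.ofReal L) ^ q))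
                      (hUmeas.diff hKc.isClosed.measurableSet)).aemeasurable
                  apply ae_of_all
                  intro x hx
                  by_cases hxU : x ∈ U
                  · rw [indicator_of_mem (mem_diff_of_mem hxU hx)]
                    apply ENNReal.rpow_le_rpow _ hq0.le
                    rw [← enorm_eq_nnnorm, ← ofReal_norm]
                    exact ENNReal.ofReal_le_ofReal (hhb x)
                  · rw [hh0 x hxU]
                    simp [ENNReal.zero_rpow_of_pos hq0]
              _ ≤ ∫⁻ x, (U \ K).indicator (fun _ => (ENNReal.ofReal L) ^ q) x ∂ν :=
                  setLIntegral_le_lintegral _ _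
              _ = (ENNReal.ofReal L) ^ q * ν (U \ K) := by
                  rw [lintegral_indicator (hUmeas.diff hKc.isClosed.measurableSet),
                    setLIntegral_const]
          calc Ih ≤ If + (ENNReal.ofReal L) ^ q * ν (U \ K) := by
                rw [hsplit]; exact add_le_add h1 h2
            _ ≤ If + (ENNReal.ofReal L) ^ q * (ENNReal.ofReal (ε/ρ) * A) := by
                gcongr
                exact le_trans hUd.le hηA
        -- combine
        have hLsplit : (ENNReal.ofReal L) ^ q = (ENNReal.ofReal ρ) ^ q * (ENNReal.ofReal (L/ρ)) ^ q := by
          rw [← ENNReal.mul_rpow_of_nonneg _ _ hq0.le, ← ENNReal.ofReal_mul hρ0.le]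
          congr 2
          field_simp
        have hkey : Ih ≤ ((1 + ENNReal.ofReal ε) ^ q) * If := by
          calc Ih ≤ If + (ENNReal.ofReal L) ^ q * (ENNReal.ofReal (ε/ρ) * A) := hIh
            _ = If + (ENNReal.ofReal ρ) ^ q * ENNReal.ofReal (ε/ρ)
                  * ((ENNReal.ofReal (L/ρ)) ^ q * A) := by
                rw [hLsplit]; ring
            _ ≤ If + (ENNReal.ofReal ρ) ^ q * ENNReal.ofReal (ε/ρ) * If := by gcongr
            _ = (1 + (ENNReal.ofReal ρ) ^ q * ENNReal.ofReal (ε/ρ)) * If := by ring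
            _ ≤ ((1 + ENNReal.ofReal ε) ^ q) * If := by
                gcongr
                have e1 : (ENNReal.ofReal ρ) ^ q = ENNReal.ofReal (ρ ^ q) :=
                  ENNReal.ofReal_rpow_of_pos hρ0
                have e2 : (1 : ℝ≥0∞) + ENNReal.ofReal ε = ENNReal.ofReal (1 + ε) := by
                  rw [ENNReal.ofReal_add zero_le_one hε.le, ENNReal.ofReal_one]
                rw [e1, e2, ENNReal.ofReal_rpow_of_pos (by linarith),
                  ← ENNReal.ofReal_mul (by positivity), ← ENNReal.ofReal_one,
                  ← ENNReal.ofReal_add zero_le_one (by positivity)]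
                exact ENNReal.ofReal_le_ofReal (key_scalar hε hq1)
        calc Ih ^ (1/q) ≤ (((1 + ENNReal.ofReal ε) ^ q) * If) ^ (1/q) :=
              ENNReal.rpow_le_rpow hkey (by positivity)
          _ = (1 + ENNReal.ofReal ε) * If ^ (1/q) := by
              rw [ENNReal.mul_rpow_of_nonneg _ _ (by positivity : (0:ℝ) ≤ 1/q),
                ← ENNReal.rpow_mul, mul_one_div, div_self hq0.ne', ENNReal.rpow_one]
end

section
/- Let f ∈ L^p₀(μ) for some p₀ ∈ [1,∞] with μ a finite measure on Ω, and suppose for every η > 0 there exists t > 0 with 0 < μ({|f| ≥ t}) < η. Then for every ε > 0 there exists a compactly supported continuous h : Ω → ℝⁿ with μ({h ≠ f}) < ε and ‖h‖_{L^p(μ)} ≤ ‖f‖_{L^p(μ)} for all p ∈ [1, ∞]. -/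
open MeasureTheory Set ENNReal

/-- Radial truncation to the closed ball of radius `t`. -/
noncomputable def radialTrunc {n : ℕ} (t : ℝ) (v : EuclideanSpace ℝ (Fin n)) :
    EuclideanSpace ℝ (Fin n) := (t / max t ‖v‖) • v

lemma radialTrunc_continuous {n : ℕ} {t : ℝ} (ht : 0 < t) :
    Continuous (radialTrunc (n := n) t) := by
  unfold radialTrunc
  apply Continuous.smul (f := fun v => t / max t ‖v‖) _ continuous_id
  exact continuous_const.div (continuous_const.max continuous_norm)
    fun v => (lt_of_lt_of_le ht (le_max_left _ _)).ne'

lemma radialTrunc_eq_self {n : ℕ} {t : ℝ} (ht : 0 < t) {v : EuclideanSpace ℝ (Fin n)}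
    (hv : ‖v‖ ≤ t) : radialTrunc t v = v := by
  rw [radialTrunc, max_eq_left hv, div_self ht.ne', one_smul]

lemma radialTrunc_norm_le {n : ℕ} {t : ℝ} (ht : 0 < t) (v : EuclideanSpace ℝ (Fin n)) :
    ‖radialTrunc t v‖ ≤ t := by
  have hmax : 0 < max t ‖v‖ := lt_of_lt_of_le ht (le_max_left _ _)
  rw [radialTrunc, norm_smul, Real.norm_eq_abs,
    abs_of_nonneg (div_nonneg ht.le hmax.le), div_mul_eq_mul_div, div_le_iff₀ hmax]
  exact mul_le_mul_of_nonneg_left (le_max_right _ _) ht.le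

/-- Lusin's theorem for a bounded measurable function and a finite measure on `ℝⁿ`. -/
lemma lusin_aux {n : ℕ} (ν : Measure (EuclideanSpace ℝ (Fin n))) [IsFiniteMeasure ν]
    {f : EuclideanSpace ℝ (Fin n) → EuclideanSpace ℝ (Fin n)} (hf : Measurable f)
    {C : ℝ} (hC : ∀ x, ‖f x‖ ≤ C) {A : Set (EuclideanSpace ℝ (Fin n))}
    (hA : MeasurableSet A) {δ : ℝ≥0∞} (hδ0 : δ ≠ 0) (hδt : δ ≠ ∞) :
    ∃ K, K ⊆ A ∧ IsCompact K ∧ ν (A \ K) < δ ∧ ContinuousOn f K := by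
  have hsm : StronglyMeasurable f := hf.stronglyMeasurable
  have hmemtop : MemLp f ⊤ ν := memLp_top_of_bound hsm.aestronglyMeasurable C (ae_of_all _ hC)
  have hmem : MemLp f 1 ν := hmemtop.mono_exponent le_top
  have hgk : ∀ k : ℕ, ∃ g, HasCompactSupport g ∧ eLpNorm (f - g) 1 ν ≤ 2⁻¹ ^ k ∧
      Continuous g ∧ MemLp g 1 ν := fun k =>
    hmem.exists_hasCompactSupport_eLpNorm_sub_le one_ne_top
      (pow_ne_zero _ (by simp))
  choose g hgsupp hgle hgcont hgmem using hgk
  have hto : Filter.Tendsto (fun k => eLpNorm (g k - f) 1 ν) Filter.atTop (nhds 0) := by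
    have h2 : Filter.Tendsto (fun k : ℕ => (2⁻¹ : ℝ≥0∞) ^ k) Filter.atTop (nhds 0) :=
      ENNReal.tendsto_pow_atTop_nhds_zero_of_lt_one (by simp [ENNReal.inv_lt_one])
    refine tendsto_of_tendsto_of_tendsto_of_le_of_le tendsto_const_nhds h2
      (fun k => zero_le) (fun k => ?_)
    rw [eLpNorm_sub_comm]; exact hgle k
  have htim : TendstoInMeasure ν g Filter.atTop f :=
    tendstoInMeasure_of_tendsto_eLpNorm one_ne_zero
      (fun k => (hgcont k).aestronglyMeasurable) hsm.aestronglyMeasurable hto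
  obtain ⟨ns, -, hae⟩ := htim.exists_seq_tendsto_ae
  have hr : (0 : ℝ) < δ.toReal / 4 := by
    have := ENNReal.toReal_pos hδ0 hδt; positivity
  obtain ⟨T, hTm, hTle, hTunif⟩ := tendstoUniformlyOn_of_ae_tendsto'
    (fun i => (hgcont (ns i)).stronglyMeasurable) hsm hae hr
  have hofr : ENNReal.ofReal (δ.toReal / 4) = δ / 4 := by
    rw [ENNReal.ofReal_div_of_pos (by norm_num), ENNReal.ofReal_toReal hδt]
    norm_num
  have hcontT : ContinuousOn f Tᶜ :=
    hTunif.continuousOn (Filter.Frequently.of_forall fun i => (hgcont (ns i)).continuousOn)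
  have hA' : MeasurableSet (A \ T) := hA.diff hTm
  obtain ⟨K, hKsub, hKcomp, hKlt⟩ := hA'.exists_isCompact_lt_add (measure_ne_top ν _)
    (ε := δ / 4) (ENNReal.div_ne_zero.mpr ⟨hδ0, by norm_num⟩)
  refine ⟨K, hKsub.trans diff_subset, hKcomp, ?_, hcontT.mono fun x hx => (hKsub hx).2⟩
  have h1 : ν ((A \ T) \ K) < δ / 4 :=
    measure_diff_lt_of_lt_add hKcomp.isClosed.measurableSet.nullMeasurableSet hKsub
      (measure_ne_top ν K) hKlt
  have hsub : A \ K ⊆ ((A \ T) \ K) ∪ T := by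
    intro x hx
    by_cases hxT : x ∈ T
    · exact Or.inr hxT
    · exact Or.inl ⟨⟨hx.1, hxT⟩, hx.2⟩
  have hd4 : (δ / 4 : ℝ≥0∞) ≠ ∞ := (ENNReal.div_lt_top hδt (by norm_num)).ne
  calc ν (A \ K) ≤ ν (((A \ T) \ K) ∪ T) := measure_mono hsub
    _ ≤ ν ((A \ T) \ K) + ν T := measure_union_le _ _
    _ < δ / 4 + δ / 4 :=
        ENNReal.add_lt_add_of_lt_of_le (measure_ne_top ν T) h1 (hTle.trans hofr.le)
    _ ≤ δ := by
        have h4 : δ / 4 ≤ δ / 2 := ENNReal.div_le_div le_rfl (by norm_num)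
        exact le_trans (add_le_add h4 h4) (le_of_eq (ENNReal.add_halves δ))

/-- Refined quantitative Lusin theorem (Remark 3.4 of the paper). -/
theorem quantitative_lusin_refined {n : ℕ} (μ : Measure (EuclideanSpace ℝ (Fin n)))
    (Ω : Set (EuclideanSpace ℝ (Fin n))) (hΩ : IsOpen Ω) (hμΩ : μ Ω < ⊤)
    (f : EuclideanSpace ℝ (Fin n) → EuclideanSpace ℝ (Fin n)) (hf : Measurable f)
    (hLp : ∃ p₀ : ℝ≥0∞, 1 ≤ p₀ ∧ MemLp f p₀ (μ.restrict Ω))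
    (hsmall : ∀ η : ℝ≥0∞, 0 < η → ∃ t : ℝ, 0 < t ∧
      0 < μ {x ∈ Ω | t ≤ ‖f x‖} ∧ μ {x ∈ Ω | t ≤ ‖f x‖} < η)
    (ε : ℝ) (hε : 0 < ε) :
    ∃ h : EuclideanSpace ℝ (Fin n) → EuclideanSpace ℝ (Fin n),
      Continuous h ∧ HasCompactSupport h ∧ tsupport h ⊆ Ω ∧
      μ {x ∈ Ω | h x ≠ f x} < ENNReal.ofReal ε ∧
      ∀ p : ℝ≥0∞, 1 ≤ p →
        eLpNorm h p (μ.restrict Ω) ≤ eLpNorm f p (μ.restrict Ω) := by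
  classical
  have hΩm : MeasurableSet Ω := hΩ.measurableSet
  set ν := μ.restrict Ω with hν
  haveI : IsFiniteMeasure ν := ⟨by rw [hν, Measure.restrict_apply_univ]; exact hμΩ⟩
  have hνeq : ∀ S : Set (EuclideanSpace ℝ (Fin n)), S ⊆ Ω → ν S = μ S := fun S hS => by
    rw [hν, Measure.restrict_apply' hΩm, inter_eq_self_of_subset_left hS]
  obtain ⟨t, ht, hE0, hEε⟩ := hsmall (ENNReal.ofReal (ε / 2))
    (ENNReal.ofReal_pos.mpr (half_pos hε))
  set E : Set (EuclideanSpace ℝ (Fin n)) := {x ∈ Ω | t ≤ ‖f x‖} with hEdef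
  have hEΩ : E ⊆ Ω := fun x hx => hx.1
  have hEm : MeasurableSet E := hΩm.inter (measurableSet_le measurable_const hf.norm)
  have hEν : ν E = μ E := hνeq E hEΩ
  have hE0ν : 0 < ν E := by rw [hEν]; exact hE0
  set A : Set (EuclideanSpace ℝ (Fin n)) := Ω ∩ {x | ‖f x‖ < t} with hAdef
  have hAΩ : A ⊆ Ω := inter_subset_left
  have hAm : MeasurableSet A := hΩm.inter (measurableSet_lt hf.norm measurable_const)
  have hAE : Ω = A ∪ E := by
    ext x
    constructor
    · intro hx
      rcases lt_or_ge ‖f x‖ t with h | h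
      · exact Or.inl ⟨hx, h⟩
      · exact Or.inr ⟨hx, h⟩
    · rintro (hx | hx)
      · exact hx.1
      · exact hx.1
  have hAEdisj : Disjoint A E :=
    Set.disjoint_left.mpr fun x hxA hxE => absurd hxA.2 (not_lt.mpr hxE.2)
  -- the truncation of f
  set f' : EuclideanSpace ℝ (Fin n) → EuclideanSpace ℝ (Fin n) :=
    fun x => radialTrunc t (f x) with hf'def
  have hf'meas : Measurable f' := (radialTrunc_continuous ht).measurable.comp hf
  have hf'bound : ∀ x, ‖f' x‖ ≤ t := fun x => radialTrunc_norm_le ht (f x)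
  have hf'A : ∀ x ∈ A, f' x = f x := fun x hx => radialTrunc_eq_self ht hx.2.le
  -- Lusin exceptional parameter
  have hδ0 : (min (ν E) (ENNReal.ofReal (ε / 2))) ≠ 0 :=
    (lt_min hE0ν (ENNReal.ofReal_pos.mpr (half_pos hε))).ne'
  have hδt : (min (ν E) (ENNReal.ofReal (ε / 2))) ≠ ∞ :=
    (lt_of_le_of_lt (min_le_right _ _) ENNReal.ofReal_lt_top).ne
  obtain ⟨K, hKA, hKcomp, hKsmall, hKcont⟩ :=
    lusin_aux ν hf'meas hf'bound hAm hδ0 hδt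
  have hKm : MeasurableSet K := hKcomp.isClosed.measurableSet
  have hμAK : μ (A \ K) = ν (A \ K) := (hνeq _ (diff_subset.trans hAΩ)).symm
  -- a generic bound on the disagreement set
  have hdis : ∀ hh : EuclideanSpace ℝ (Fin n) → EuclideanSpace ℝ (Fin n),
      (∀ x ∈ K, hh x = f x) → μ {x ∈ Ω | hh x ≠ f x} < ENNReal.ofReal ε := by
    intro hh hhK
    have hcover : {x ∈ Ω | hh x ≠ f x} ⊆ (A \ K) ∪ E := by
      intro x hx
      have hxΩ : x ∈ Ω := hx.1
      rcases (hAE ▸ hxΩ : x ∈ A ∪ E) with hxA | hxE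
      · refine Or.inl ⟨hxA, fun hxK => hx.2 (hhK x hxK)⟩
      · exact Or.inr hxE
    calc μ {x ∈ Ω | hh x ≠ f x} ≤ μ ((A \ K) ∪ E) := measure_mono hcover
      _ ≤ μ (A \ K) + μ E := measure_union_le _ _
      _ < ENNReal.ofReal (ε / 2) + ENNReal.ofReal (ε / 2) := by
          refine ENNReal.add_lt_add ?_ hEε
          rw [hμAK]
          exact lt_of_lt_of_le hKsmall (min_le_right _ _)
      _ = ENNReal.ofReal ε := by
          rw [← ENNReal.ofReal_add (by positivity) (by positivity), add_halves]
  rcases K.eq_empty_or_nonempty with hKemp | hKne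
  · -- use the zero function
    refine ⟨0, continuous_const, ?_, ?_, hdis 0 (by simp [hKemp]), ?_⟩
    · have : tsupport (0 : EuclideanSpace ℝ (Fin n) → EuclideanSpace ℝ (Fin n)) = ∅ := by
        simp [tsupport]
      rw [HasCompactSupport, this]; exact isCompact_empty
    · have : tsupport (0 : EuclideanSpace ℝ (Fin n) → EuclideanSpace ℝ (Fin n)) = ∅ := by
        simp [tsupport]
      rw [this]; exact empty_subset _
    · intro p hp
      simp [eLpNorm_zero]
  -- Tietze extension of f' from K
  haveI : TietzeExtension (EuclideanSpace ℝ (Fin n)) := TietzeExtension.of_tvs ℝ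
  obtain ⟨g, hg⟩ := ContinuousMap.exists_restrict_eq (Y := EuclideanSpace ℝ (Fin n))
    hKcomp.isClosed ⟨K.restrict f', hKcont.restrict⟩
  have hgK : ∀ x ∈ K, g x = f' x := by
    intro x hx
    have := DFunLike.congr_fun hg (⟨x, hx⟩ : K)
    exact this
  -- a neighborhood of K inside Ω with small extra measure
  obtain ⟨L, hLcomp, hKL, hLΩ⟩ := exists_compact_between hKcomp hΩ (hKA.trans hAΩ)
  have hνK : ν K < ν K + ν E := ENNReal.lt_add_right (measure_ne_top ν K) hE0ν.ne'
  obtain ⟨V, hKV, hVopen, hVsmall⟩ := Set.exists_isOpen_lt_of_lt K _ hνK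
  have hVK : ν (V \ K) < ν E :=
    measure_diff_lt_of_lt_add hKm.nullMeasurableSet hKV (measure_ne_top ν K) hVsmall
  obtain ⟨r₀, hr₀, hthick⟩ := hKcomp.exists_thickening_subset_open
    (isOpen_interior.inter hVopen) (subset_inter hKL hKV)
  -- the cutoff function
  set φ : EuclideanSpace ℝ (Fin n) → ℝ := fun x => max 0 (1 - Metric.infDist x K / r₀) with hφdef
  have hφcont : Continuous φ :=
    continuous_const.max (continuous_const.sub ((Metric.continuous_infDist_pt K).div_const r₀))
  have hφ0 : ∀ x, 0 ≤ φ x := fun x => le_max_left _ _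
  have hφ1 : ∀ x, φ x ≤ 1 := fun x =>
    max_le zero_le_one (sub_le_self _ (div_nonneg Metric.infDist_nonneg hr₀.le))
  have hφK : ∀ x ∈ K, φ x = 1 := by
    intro x hx
    simp [hφdef, Metric.infDist_zero_of_mem hx]
  have hφsupp : ∀ x, φ x ≠ 0 → x ∈ Metric.thickening r₀ K := by
    intro x hx
    have h1 : 0 < 1 - Metric.infDist x K / r₀ := by
      rcases lt_or_ge 0 (1 - Metric.infDist x K / r₀) with h | h
      · exact h
      · exact absurd (max_eq_left h) hx
    have : Metric.infDist x K < r₀ := by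
      rw [sub_pos, div_lt_one hr₀] at h1
      exact h1
    exact (Metric.mem_thickening_iff_infDist_lt hKne).mpr this
  -- the approximating function
  set h : EuclideanSpace ℝ (Fin n) → EuclideanSpace ℝ (Fin n) :=
    fun x => φ x • radialTrunc t (g x) with hhdef
  have hhcont : Continuous h :=
    hφcont.smul ((radialTrunc_continuous ht).comp g.continuous)
  have hhK : ∀ x ∈ K, h x = f x := by
    intro x hx
    have hx' : x ∈ A := hKA hx
    rw [hhdef]
    simp only
    rw [hφK x hx, one_smul, hgK x hx, radialTrunc_eq_self ht (hf'bound x), hf'A x hx']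
  have hhb : ∀ x, ‖h x‖ ≤ t := by
    intro x
    rw [hhdef]
    simp only
    rw [norm_smul, Real.norm_eq_abs, abs_of_nonneg (hφ0 x)]
    calc φ x * ‖radialTrunc t (g x)‖ ≤ 1 * t :=
          mul_le_mul (hφ1 x) (radialTrunc_norm_le ht _) (norm_nonneg _) zero_le_one
      _ = t := one_mul t
  have hsupp : Function.support h ⊆ Metric.thickening r₀ K := by
    intro x hx
    by_contra hxc
    have : φ x = 0 := by
      by_contra hφx
      exact hxc (hφsupp x hφx)
    exact hx (by rw [hhdef]; simp [this])
  have hsuppV : ∀ x, x ∉ V → h x = 0 := by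
    intro x hxV
    by_contra hx
    exact hxV ((hthick (hsupp hx)).2)
  have htsupp : tsupport h ⊆ L := by
    have h1 : Function.support h ⊆ interior L := fun x hx => (hthick (hsupp hx)).1
    exact (closure_mono h1).trans (hLcomp.isClosed.closure_subset_iff.mpr interior_subset)
  have htsuppΩ : tsupport h ⊆ Ω := htsupp.trans hLΩ
  have hhcs : HasCompactSupport h := hLcomp.of_isClosed_subset (isClosed_closure) htsupp
  refine ⟨h, hhcont, hhcs, htsuppΩ, hdis h hhK, ?_⟩
  -- the norm bounds
  intro p hp
  rcases eq_or_ne p ∞ with hptop | hptop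
  · rw [hptop, eLpNorm_exponent_top, eLpNorm_exponent_top]
    refine le_trans (eLpNormEssSup_le_of_ae_bound (C := t) (ae_of_all _ hhb)) ?_
    by_contra hlt
    push_neg at hlt
    have hae := ae_lt_of_essSup_lt hlt
    have hEnull : ν E = 0 := by
      refine measure_mono_null ?_ (by rw [ae_iff] at hae; exact hae)
      intro x hx
      simp only [mem_setOf_eq, not_lt]
      rw [← ofReal_norm]
      exact ENNReal.ofReal_le_ofReal hx.2
    exact absurd hEnull hE0ν.ne'
  · have hp0 : p ≠ 0 := (lt_of_lt_of_le zero_lt_one hp).ne'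
    rw [eLpNorm_eq_lintegral_rpow_enorm_toReal hp0 hptop, eLpNorm_eq_lintegral_rpow_enorm_toReal hp0 hptop]
    have hq : 0 < p.toReal := ENNReal.toReal_pos hp0 hptop
    refine ENNReal.rpow_le_rpow ?_ (by positivity)
    set q := p.toReal
    have hfmeas : Measurable fun x => (‖f x‖₊ : ℝ≥0∞) ^ q :=
      (ENNReal.continuous_rpow_const.measurable).comp hf.enorm
    calc ∫⁻ x, (‖h x‖₊ : ℝ≥0∞) ^ q ∂ν
        = (∫⁻ x in K, (‖h x‖₊ : ℝ≥0∞) ^ q ∂ν) + ∫⁻ x in Kᶜ, (‖h x‖₊ : ℝ≥0∞) ^ q ∂ν :=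
          (lintegral_add_compl _ hKm).symm
      _ ≤ (∫⁻ x in K, (‖f x‖₊ : ℝ≥0∞) ^ q ∂ν) + ENNReal.ofReal t ^ q * ν E := by
          refine add_le_add ?_ ?_
          · refine le_of_eq (setLIntegral_congr_fun hKm (fun x hx => ?_))
            rw [hhK x hx]
          · calc ∫⁻ x in Kᶜ, (‖h x‖₊ : ℝ≥0∞) ^ q ∂ν
                ≤ ∫⁻ x in Kᶜ, ((V \ K).indicator
                    (fun _ => ENNReal.ofReal t ^ q)) x ∂ν := by
                  refine setLIntegral_mono
                    (measurable_const.indicator (hVopen.measurableSet.diff hKm)) ?_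
                  intro x hx
                  by_cases hxV : x ∈ V
                  · rw [Set.indicator_of_mem (show x ∈ V \ K from ⟨hxV, hx⟩)]
                    refine ENNReal.rpow_le_rpow ?_ hq.le
                    rw [← ENNReal.ofReal_coe_nnreal, coe_nnnorm]
                    exact ENNReal.ofReal_le_ofReal (hhb x)
                  · rw [Set.indicator_of_notMem (fun hc => hxV hc.1), hsuppV x hxV]
                    simp [ENNReal.zero_rpow_of_pos hq]
              _ ≤ ∫⁻ x, ((V \ K).indicator (fun _ => ENNReal.ofReal t ^ q)) x ∂ν :=
                  setLIntegral_le_lintegral _ _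
              _ = ENNReal.ofReal t ^ q * ν (V \ K) :=
                  lintegral_indicator_const (hVopen.measurableSet.diff hKm) _
              _ ≤ ENNReal.ofReal t ^ q * ν E := mul_le_mul_right hVK.le _
      _ ≤ (∫⁻ x in K, (‖f x‖₊ : ℝ≥0∞) ^ q ∂ν) + ∫⁻ x in E, (‖f x‖₊ : ℝ≥0∞) ^ q ∂ν := by
          refine add_le_add_right ?_ _
          rw [← setLIntegral_const E (ENNReal.ofReal t ^ q)]
          refine setLIntegral_mono hfmeas fun x hx => ?_
          refine ENNReal.rpow_le_rpow ?_ hq.le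
          rw [← ENNReal.ofReal_coe_nnreal, coe_nnnorm]
          exact ENNReal.ofReal_le_ofReal hx.2
      _ = ∫⁻ x in K ∪ E, (‖f x‖₊ : ℝ≥0∞) ^ q ∂ν := by
          refine (lintegral_union hEm ?_).symm
          exact hAEdisj.mono_left hKA
      _ ≤ ∫⁻ x, (‖f x‖₊ : ℝ≥0∞) ^ q ∂ν := setLIntegral_le_lintegral _ _
end

section
/- With the layer decomposition h = Σ_{i=1}^N h_i as above (each |h_i| ≤ η = ‖h‖_∞/N), suppose g_i are C¹ functions with supp g_i ⊆ supp h_i and ‖Dg_i‖_∞ ≤ (1 + ε/(2N))·η with ε < 1. Then the function g = Σ_{i=1}^N g_i satisfies |Dg(x)| ≤ |h(x)| + 2η for every x ∈ Ω. -/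
open Set

lemma norm_gradient_eq {E : Type*} [NormedAddCommGroup E] [InnerProductSpace ℝ E]
    [CompleteSpace E] (f : E → ℝ) (x : E) : ‖gradient f x‖ = ‖fderiv ℝ f x‖ := by
  rw [gradient]
  exact (InnerProductSpace.toDual ℝ E).symm.norm_map _

/-- Pointwise gradient bound for the sum of the layer approximations
(estimate (3.27) in the proof of Theorem 3.2). -/
theorem gradient_sum_layers_bound {n : ℕ}
    (Ω : Set (EuclideanSpace ℝ (Fin n))) (hΩ : IsOpen Ω)
    (h : EuclideanSpace ℝ (Fin n) → EuclideanSpace ℝ (Fin n))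
    (hbdd : BddAbove (Set.range fun x => ‖h x‖))
    (N : ℕ) (hN : 0 < N) (ε η : ℝ) (hε₀ : 0 < ε) (hε₁ : ε < 1)
    (hη : η = (⨆ x, ‖h x‖) / N)
    (H : ℕ → EuclideanSpace ℝ (Fin n) → EuclideanSpace ℝ (Fin n))
    (hHnorm : ∀ i x, ‖H i x‖ ≤ η)
    (hHsum : ∀ x, h x = ∑ i ∈ Finset.Icc 1 N, H i x)
    (hHnest : ∀ i, tsupport (H (i + 1)) ⊆ tsupport (H i))
    (hHlevel : ∀ i ∈ Finset.Icc 1 N,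
      tsupport (H i) ⊆ {x | ((i : ℝ) - 1) * η ≤ ‖h x‖})
    (g : ℕ → EuclideanSpace ℝ (Fin n) → ℝ)
    (hg : ∀ i, ContDiff ℝ 1 (g i))
    (hgsupp : ∀ i ∈ Finset.Icc 1 N, tsupport (g i) ⊆ tsupport (H i))
    (hgrad : ∀ i ∈ Finset.Icc 1 N, ∀ x, ‖gradient (g i) x‖ ≤ (1 + ε / (2 * N)) * η) :
    ∀ x, ‖gradient (fun y => ∑ i ∈ Finset.Icc 1 N, g i y) x‖ ≤ ‖h x‖ + 2 * η := by
  intro x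
  classical
  -- η ≥ 0
  have hη0 : 0 ≤ η := by
    rw [hη]
    apply div_nonneg _ (Nat.cast_nonneg N)
    exact le_trans (norm_nonneg (h 0)) (le_ciSup hbdd 0)
  have hdiff : ∀ i, DifferentiableAt ℝ (g i) x := fun i =>
    ((hg i).differentiable one_ne_zero).differentiableAt
  -- gradient of the sum is bounded by the sum of gradient norms
  have hsum : ‖gradient (fun y => ∑ i ∈ Finset.Icc 1 N, g i y) x‖
      ≤ ∑ i ∈ Finset.Icc 1 N, ‖gradient (g i) x‖ := by
    rw [norm_gradient_eq]
    rw [fderiv_fun_sum (fun i _ => hdiff i)]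
    refine le_trans (norm_sum_le _ _) ?_
    exact Finset.sum_le_sum fun i _ => by rw [norm_gradient_eq]
  -- gradient vanishes outside the support of H i
  have hzero : ∀ i ∈ Finset.Icc 1 N, x ∉ tsupport (H i) → ‖gradient (g i) x‖ = 0 := by
    intro i hi hx
    have hx' : x ∉ tsupport (g i) := fun hmem => hx (hgsupp i hi hmem)
    have : g i =ᶠ[nhds x] 0 := notMem_tsupport_iff_eventuallyEq.mp hx'
    rw [norm_gradient_eq, this.fderiv_eq]
    show ‖fderiv ℝ (fun _ => (0:ℝ)) x‖ = 0
    rw [fderiv_const_apply, norm_zero]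
  set S : Finset ℕ := (Finset.Icc 1 N).filter (fun i => x ∈ tsupport (H i)) with hS
  by_cases hSne : S.Nonempty
  · set i₀ := S.max' hSne with hi₀
    have hi₀S : i₀ ∈ S := S.max'_mem hSne
    have hi₀Icc : i₀ ∈ Finset.Icc 1 N := Finset.mem_filter.mp hi₀S |>.1
    have hi₀supp : x ∈ tsupport (H i₀) := (Finset.mem_filter.mp hi₀S).2
    have hlevel : ((i₀ : ℝ) - 1) * η ≤ ‖h x‖ := hHlevel i₀ hi₀Icc hi₀supp
    have hi₀N : (i₀ : ℝ) ≤ N := by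
      exact_mod_cast (Finset.mem_Icc.mp hi₀Icc).2
    -- sum bound
    have hsum2 : ∑ i ∈ Finset.Icc 1 N, ‖gradient (g i) x‖
        ≤ (i₀ : ℝ) * ((1 + ε / (2 * N)) * η) := by
      have hle : ∑ i ∈ Finset.Icc 1 N, ‖gradient (g i) x‖
          ≤ ∑ i ∈ S, ((1 + ε / (2 * N)) * η) := by
        rw [hS, Finset.sum_filter]
        refine Finset.sum_le_sum fun i hi => ?_
        by_cases hx : x ∈ tsupport (H i)
        · rw [if_pos hx]; exact hgrad i hi x
        · rw [if_neg hx, hzero i hi hx]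
      refine hle.trans ?_
      rw [Finset.sum_const, nsmul_eq_mul]
      have hcard : (S.card : ℝ) ≤ (i₀ : ℝ) := by
        have : S.card ≤ i₀ := by
          have : S ⊆ Finset.Icc 1 i₀ := by
            intro j hj
            have hj' := Finset.mem_filter.mp hj
            exact Finset.mem_Icc.mpr ⟨(Finset.mem_Icc.mp hj'.1).1, S.le_max' j hj⟩
          calc S.card ≤ (Finset.Icc 1 i₀).card := Finset.card_le_card this
            _ = i₀ := by rw [Nat.card_Icc]; omega
        exact_mod_cast this
      have hpos : 0 ≤ (1 + ε / (2 * N)) * η := by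
        apply mul_nonneg _ hη0
        have : 0 ≤ ε / (2 * N) := by positivity
        linarith
      exact mul_le_mul_of_nonneg_right hcard hpos
    refine hsum.trans (hsum2.trans ?_)
    have hN1 : (1 : ℝ) ≤ N := by exact_mod_cast hN
    have hi₀1 : (1 : ℝ) ≤ i₀ := by
      exact_mod_cast (Finset.mem_Icc.mp hi₀Icc).1
    have key : (i₀ : ℝ) * (ε / (2 * N)) * η ≤ η / 2 := by
      have h2N : (0:ℝ) < 2 * N := by linarith
      have h1 : (i₀ : ℝ) * (ε / (2 * N)) ≤ 1 / 2 := by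
        rw [mul_div_assoc', div_le_iff₀ h2N]
        nlinarith
      nlinarith [mul_le_mul_of_nonneg_right h1 hη0]
    nlinarith [hlevel, hη0, key]
  · -- all gradients vanish
    have : ∑ i ∈ Finset.Icc 1 N, ‖gradient (g i) x‖ = 0 := by
      refine Finset.sum_eq_zero fun i hi => ?_
      apply hzero i hi
      intro hx
      exact hSne ⟨i, Finset.mem_filter.mpr ⟨hi, hx⟩⟩
    rw [this] at hsum
    have : 0 ≤ ‖h x‖ := norm_nonneg _
    linarith
end
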